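/- Let n, h, k be integers with 1 ≤ k ≤ h and n ≡ h (mod 2). Then the total number of k-down steps, summed over all generalized Dyck paths from (0,0) to (n,h), equals C(n, (n+h)/2 + 1) − C(n, (n+h)/2 + k + 1). -/
import Mathlib


open Finset

attribute [local instance] Classical.propDecidable

/-- The height of the lattice path `p` (where `true` is a northeast step `(1,1)` and
`false` is a southeast step `(1,-1)`) after its first `i` steps. -/
def pathHeight {n : ℕ} (p : Fin n → Bool) (i : ℕ) : ℤ :=
  ∑ j ∈ Finset.univ.filter (fun j : Fin n => (j : ℕ) < i), (if p j then (1 : ℤ) else -1)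

/-- `p` is a generalized Dyck path from `(0,0)` to `(n,h)`: it ends at height `h`
and never goes below the x-axis. -/
def IsGDPath {n : ℕ} (h : ℤ) (p : Fin n → Bool) : Prop :=
  pathHeight p n = h ∧ ∀ i ≤ n, 0 ≤ pathHeight p i

/-- The set of generalized Dyck paths from `(0,0)` to `(n,h)`. -/
noncomputable def gdPaths (n : ℕ) (h : ℤ) : Finset (Fin n → Bool) :=
  Finset.univ.filter (IsGDPath h)

/-- The number of `k`-down steps of `p`, i.e. southeast steps from height `k` to `k-1`. -/
noncomputable def downSteps {n : ℕ} (k : ℤ) (p : Fin n → Bool) : ℕ :=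
  (Finset.univ.filter (fun i : Fin n => p i = false ∧ pathHeight p (i : ℕ) = k)).card

/-- Binomial coefficient on integers, `0` unless `0 ≤ b ≤ a`. -/
def binom (a b : ℤ) : ℤ :=
  if 0 ≤ b ∧ b ≤ a then (a.toNat.choose b.toNat : ℤ) else 0


-- pathHeight as sum of ite
lemma pathHeight_eq {n : ℕ} (p : Fin n → Bool) (i : ℕ) :
    pathHeight p i = ∑ j : Fin n, if (j : ℕ) < i then (if p j then (1 : ℤ) else -1) else 0 := by
  rw [pathHeight, Finset.sum_filter]

lemma pathHeight_snoc {n : ℕ} (q : Fin n → Bool) (b : Bool) {i : ℕ} (hi : i ≤ n) :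
    pathHeight (Fin.snoc q b) i = pathHeight q i := by
  rw [pathHeight_eq, pathHeight_eq, Fin.sum_univ_castSucc]
  simp only [Fin.snoc_castSucc, Fin.coe_castSucc, Fin.val_last]
  rw [if_neg (by omega), add_zero]

lemma pathHeight_snoc_top {n : ℕ} (q : Fin n → Bool) (b : Bool) :
    pathHeight (Fin.snoc q b) (n + 1) = pathHeight q n + (if b then (1 : ℤ) else -1) := by
  rw [pathHeight_eq, pathHeight_eq, Fin.sum_univ_castSucc]
  simp only [Fin.snoc_castSucc, Fin.coe_castSucc, Fin.val_last, Fin.snoc_last]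
  rw [if_pos (Nat.lt_succ_self n)]
  congr 1
  apply Finset.sum_congr rfl
  intro j _
  have := j.isLt
  simp [this, Nat.lt_succ_of_lt this]

lemma snoc_mem_gdPaths {n : ℕ} {h : ℤ} (hh : 0 ≤ h) (q : Fin n → Bool) (b : Bool) :
    Fin.snoc q b ∈ gdPaths (n + 1) h ↔ q ∈ gdPaths n (h - if b then 1 else -1) := by
  simp only [gdPaths, Finset.mem_filter, Finset.mem_univ, true_and, IsGDPath]
  constructor
  · rintro ⟨he, hnn⟩
    rw [pathHeight_snoc_top] at he
    refine ⟨by omega, fun i hi => ?_⟩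
    have := hnn i (by omega)
    rwa [pathHeight_snoc q b hi] at this
  · rintro ⟨he, hnn⟩
    constructor
    · rw [pathHeight_snoc_top, he]; ring
    · intro i hi
      rcases Nat.lt_or_ge i (n + 1) with h1 | h1
      · rw [pathHeight_snoc q b (by omega)]; exact hnn i (by omega)
      · have : i = n + 1 := by omega
        subst this
        rw [pathHeight_snoc_top, he]
        omega

lemma downSteps_eq {n : ℕ} (k : ℤ) (p : Fin n → Bool) :
    (downSteps k p : ℤ) =
      ∑ i : Fin n, if p i = false ∧ pathHeight p (i : ℕ) = k then (1 : ℤ) else 0 := by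
  rw [downSteps, Finset.card_filter]
  push_cast
  rfl

lemma downSteps_snoc {n : ℕ} (k : ℤ) (q : Fin n → Bool) (b : Bool) :
    (downSteps k (Fin.snoc q b) : ℤ) =
      (downSteps k q : ℤ) + (if b = false ∧ pathHeight q n = k then 1 else 0) := by
  rw [downSteps_eq, downSteps_eq, Fin.sum_univ_castSucc]
  congr 1
  · apply Finset.sum_congr rfl
    intro j _
    have hj := j.isLt
    rw [Fin.snoc_castSucc]
    simp only [Fin.coe_castSucc]
    simp only [pathHeight_snoc q b (le_of_lt hj)]
  · simp only [Fin.snoc_last, Fin.val_last]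
    simp only [pathHeight_snoc q b (le_refl n)]

lemma gdPaths_neg {n : ℕ} {h : ℤ} (hh : h < 0) : gdPaths n h = ∅ := by
  ext p
  simp only [gdPaths, Finset.mem_filter, Finset.mem_univ, true_and, Finset.notMem_empty,
    iff_false, IsGDPath, not_and]
  intro he hnn
  have := hnn n le_rfl
  omega

lemma snoc_true_mem {n : ℕ} {h : ℤ} (hh : 0 ≤ h) (q : Fin n → Bool) :
    Fin.snoc q true ∈ gdPaths (n + 1) h ↔ q ∈ gdPaths n (h - 1) := by
  simpa using snoc_mem_gdPaths hh q true

lemma snoc_false_mem {n : ℕ} {h : ℤ} (hh : 0 ≤ h) (q : Fin n → Bool) :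
    Fin.snoc q false ∈ gdPaths (n + 1) h ↔ q ∈ gdPaths n (h + 1) := by
  have := snoc_mem_gdPaths hh q false
  simp only [Bool.false_eq_true, if_false] at this
  rw [this]
  norm_num [sub_neg_eq_add]

lemma sum_filter_last {n : ℕ} {h h' : ℤ} (b : Bool)
    (hmem : ∀ q : Fin n → Bool, Fin.snoc q b ∈ gdPaths (n + 1) h ↔ q ∈ gdPaths n h')
    (f : (Fin (n + 1) → Bool) → ℤ) :
    ∑ p ∈ (gdPaths (n + 1) h).filter (fun p => p (Fin.last n) = b), f p =
      ∑ q ∈ gdPaths n h', f (Fin.snoc q b) := by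
  apply Finset.sum_nbij' (i := fun p => Fin.init p) (j := fun q => Fin.snoc q b)
  · intro p hp
    simp only [Finset.mem_filter] at hp
    obtain ⟨hp1, hp2⟩ := hp
    have hps : Fin.snoc (Fin.init p) b = p := by
      rw [← hp2]; exact Fin.snoc_init_self p
    rw [← hps] at hp1
    exact (hmem _).mp hp1
  · intro q hq
    rw [Finset.mem_filter]
    refine ⟨(hmem _).mpr hq, by simp⟩
  · intro p hp
    simp only [Finset.mem_filter] at hp
    rw [← hp.2]; exact Fin.snoc_init_self p
  · intro q _
    simp
  · intro p hp
    simp only [Finset.mem_filter] at hp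
    have hps : Fin.snoc (Fin.init p) b = p := by
      rw [← hp.2]; exact Fin.snoc_init_self p
    rw [hps]

lemma sum_gdPaths_succ {n : ℕ} {h : ℤ} (hh : 0 ≤ h) (f : (Fin (n + 1) → Bool) → ℤ) :
    ∑ p ∈ gdPaths (n + 1) h, f p =
      (∑ q ∈ gdPaths n (h - 1), f (Fin.snoc q true)) +
      (∑ q ∈ gdPaths n (h + 1), f (Fin.snoc q false)) := by
  have hsplit : gdPaths (n + 1) h =
      (gdPaths (n + 1) h).filter (fun p => p (Fin.last n) = true) ∪
      (gdPaths (n + 1) h).filter (fun p => p (Fin.last n) = false) := by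
    rw [← Finset.filter_or]
    refine (Finset.filter_true_of_mem ?_).symm
    intro p _
    rcases Bool.eq_false_or_eq_true (p (Fin.last n)) with hb | hb
    · left; exact hb
    · right; exact hb
  rw [hsplit, Finset.sum_union]
  · rw [sum_filter_last true (snoc_true_mem hh) f, sum_filter_last false (snoc_false_mem hh) f]
  · rw [Finset.disjoint_left]
    intro p h1 h2
    simp only [Finset.mem_filter] at h1 h2
    rw [h1.2] at h2
    exact Bool.noConfusion h2.2

lemma card_rec {n : ℕ} {h : ℤ} (hh : 0 ≤ h) :
    ((gdPaths (n + 1) h).card : ℤ) =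
      ((gdPaths n (h - 1)).card : ℤ) + ((gdPaths n (h + 1)).card : ℤ) := by
  have := sum_gdPaths_succ (n := n) hh (fun _ => (1 : ℤ))
  simpa using this

lemma endpoint_of_mem {n : ℕ} {h : ℤ} {q : Fin n → Bool} (hq : q ∈ gdPaths n h) :
    pathHeight q n = h := by
  simp only [gdPaths, Finset.mem_filter, IsGDPath] at hq
  exact hq.2.1

lemma sum_rec {n : ℕ} {h k : ℤ} (hh : 0 ≤ h) :
    (∑ p ∈ gdPaths (n + 1) h, (downSteps k p : ℤ)) =
      (∑ q ∈ gdPaths n (h - 1), (downSteps k q : ℤ)) +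
      (∑ q ∈ gdPaths n (h + 1), (downSteps k q : ℤ)) +
      (if h + 1 = k then ((gdPaths n (h + 1)).card : ℤ) else 0) := by
  rw [sum_gdPaths_succ hh (fun p => (downSteps k p : ℤ))]
  have h1 : ∀ q ∈ gdPaths n (h - 1), (downSteps k (Fin.snoc q true) : ℤ) = (downSteps k q : ℤ) := by
    intro q _
    rw [downSteps_snoc]
    simp
  have h2 : ∀ q ∈ gdPaths n (h + 1), (downSteps k (Fin.snoc q false) : ℤ) =
      (downSteps k q : ℤ) + (if h + 1 = k then 1 else 0) := by
    intro q hq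
    rw [downSteps_snoc]
    simp [endpoint_of_mem hq]
  rw [Finset.sum_congr rfl h1, Finset.sum_congr rfl h2, Finset.sum_add_distrib]
  rw [Finset.sum_ite_irrel, Finset.sum_const, Finset.sum_const_zero]
  simp only [nsmul_eq_mul, mul_one]
  split <;> ring

lemma card_zero_zero : ((gdPaths 0 (0 : ℤ)).card : ℤ) = 1 := by
  have : gdPaths 0 (0 : ℤ) = Finset.univ := by
    ext p
    simp [gdPaths, IsGDPath, pathHeight]
  rw [this]
  simp

lemma gdPaths_zero_ne {h : ℤ} (hh : h ≠ 0) : gdPaths 0 h = ∅ := by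
  ext p
  simp only [gdPaths, Finset.mem_filter, Finset.mem_univ, true_and, Finset.notMem_empty,
    iff_false, IsGDPath, not_and]
  intro he
  exfalso
  apply hh
  rw [← he, pathHeight]
  simp

lemma downSteps_zero (k : ℤ) (p : Fin 0 → Bool) : downSteps k p = 0 := by
  simp [downSteps]

def Bn (n j : ℕ) : ℤ := (n.choose j : ℤ)

lemma Bn_succ (n j : ℕ) (hj : 1 ≤ j) : Bn (n + 1) j = Bn n (j - 1) + Bn n j := by
  obtain ⟨i, rfl⟩ : ∃ i, j = i + 1 := ⟨j - 1, by omega⟩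
  simp [Bn, Nat.choose_succ_succ]

lemma Bn_zero (j : ℕ) (hj : 1 ≤ j) : Bn 0 j = 0 := by
  obtain ⟨i, rfl⟩ : ∃ i, j = i + 1 := ⟨j - 1, by omega⟩
  simp [Bn]

lemma Bn_symm (n j : ℕ) (h : n = 2 * j + 1) : Bn n j = Bn n (j + 1) := by
  subst h
  have := Nat.choose_symm (n := 2 * j + 1) (k := j + 1) (by omega)
  have h2 : 2 * j + 1 - (j + 1) = j := by omega
  rw [h2] at this
  rw [Bn, Bn, this]

lemma key (k : ℕ) (hk : 1 ≤ k) :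
    ∀ n h : ℕ, n % 2 = h % 2 →
    ((gdPaths n (h : ℤ)).card : ℤ) = Bn n ((n + h) / 2) - Bn n ((n + h) / 2 + 1) ∧
    (∑ p ∈ gdPaths n (h : ℤ), (downSteps (k : ℤ) p : ℤ)) =
      Bn n ((n + h) / 2 + max 1 (k - h)) - Bn n ((n + h) / 2 + k + 1) := by
  intro n
  induction n with
  | zero =>
    intro h hpar
    rcases Nat.eq_zero_or_pos h with rfl | hpos
    · constructor
      · rw [show (((0:ℕ)) : ℤ) = (0 : ℤ) by norm_num, card_zero_zero]
        rw [show (0 + 0) / 2 = 0 by norm_num]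
        rw [Bn_zero 1 le_rfl]
        simp [Bn]
      · have hz : ∀ p ∈ gdPaths 0 (((0:ℕ)) : ℤ), (downSteps (k : ℤ) p : ℤ) = 0 := by
          intro p _
          rw [downSteps_zero]
          norm_num
        rw [Finset.sum_congr rfl hz, Finset.sum_const_zero]
        rw [Bn_zero _ (by omega), Bn_zero _ (by omega)]
        ring
    · have hne : ((h : ℤ)) ≠ 0 := by exact_mod_cast hpos.ne'
      rw [gdPaths_zero_ne hne]
      have h2 : 2 ≤ h := by omega
      constructor
      · rw [Bn_zero _ (by omega), Bn_zero _ (by omega)]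
        simp
      · rw [Bn_zero _ (by omega), Bn_zero _ (by omega)]
        simp
  | succ n ih =>
    intro h hpar
    rcases Nat.eq_zero_or_pos h with rfl | hpos
    · -- h = 0
      have hodd : n % 2 = 1 := by omega
      obtain ⟨ih1c, ih1s⟩ := ih 1 (by omega)
      set m := (n + 1) / 2 with hm
      have hn2m : n = 2 * (m - 1) + 1 := by omega
      have hm1 : 1 ≤ m := by omega
      have e1 : (n + 1) / 2 = m := rfl
      have e2 : (n + 1 + 0) / 2 = m := by omega
      have hcast0 : (((0:ℕ)) : ℤ) = (0 : ℤ) := by norm_num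
      have hcast1 : ((0 : ℤ) + 1) = (((1:ℕ)) : ℤ) := by norm_num
      have hcr := card_rec (n := n) (h := (0 : ℤ)) le_rfl
      rw [gdPaths_neg (by norm_num : (0:ℤ) - 1 < 0), hcast1] at hcr
      have hsr := sum_rec (n := n) (h := (0 : ℤ)) (k := (k : ℤ)) le_rfl
      rw [gdPaths_neg (by norm_num : (0:ℤ) - 1 < 0), hcast1] at hsr
      have hsymm : Bn n (m - 1) = Bn n m := by
        have := Bn_symm n (m - 1) (by omega)
        rwa [show m - 1 + 1 = m by omega] at this
      constructor
      · rw [hcast0, hcr]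
        simp only [Finset.card_empty, Nat.cast_zero, zero_add]
        rw [ih1c]
        rw [Bn_succ n m (by omega), Bn_succ n (m + 1) (by omega)]
        rw [show m + 1 - 1 = m from by omega, hsymm]
        ring
      · rw [hcast0, hsr]
        simp only [Finset.sum_empty, zero_add]
        rw [ih1s]
        rcases eq_or_ne k 1 with rfl | hk2
        · rw [if_pos rfl, ih1c]
          rw [show m + (1 ⊔ (1 - 1)) = m + 1 from by omega,
              show m + (1 ⊔ (1 - 0)) = m + 1 from by omega]
          rw [Bn_succ n (m + 1) (by omega), Bn_succ n (m + 1 + 1) (by omega)]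
          rw [show m + 1 - 1 = m from by omega, show m + 1 + 1 - 1 = m + 1 from by omega]
          ring
        · rw [if_neg (by exact_mod_cast fun hh => hk2 (by exact_mod_cast hh.symm))]
          rw [show m + (1 ⊔ (k - 1)) = m + k - 1 from by omega,
              show m + (1 ⊔ (k - 0)) = m + k from by omega]
          rw [Bn_succ n (m + k) (by omega), Bn_succ n (m + k + 1) (by omega)]
          rw [show m + k + 1 - 1 = m + k from by omega]
          ring
    · -- h ≥ 1
      obtain ⟨ih0c, ih0s⟩ := ih (h - 1) (by omega)
      obtain ⟨ih2c, ih2s⟩ := ih (h + 1) (by omega)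
      have hcast0 : ((h : ℤ) - 1) = (((h - 1 : ℕ)) : ℤ) := by push_cast [hpos]; ring
      have hcast2 : ((h : ℤ) + 1) = (((h + 1 : ℕ)) : ℤ) := by push_cast; ring
      set m := (n + 1 + h) / 2 with hm
      have hm1 : 1 ≤ m := by omega
      have e0 : (n + (h - 1)) / 2 = m - 1 := by omega
      have e2 : (n + (h + 1)) / 2 = m := by omega
      have hcr := card_rec (n := n) (h := (h : ℤ)) (by positivity)
      rw [hcast0, hcast2] at hcr
      have hsr := sum_rec (n := n) (h := (h : ℤ)) (k := (k : ℤ)) (by positivity)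
      rw [hcast0, hcast2] at hsr
      constructor
      · rw [hcr, ih0c, ih2c, e0, e2]
        rw [show m - 1 + 1 = m from by omega]
        rw [Bn_succ n m (by omega), Bn_succ n (m + 1) (by omega)]
        rw [show m + 1 - 1 = m from by omega]
        ring
      · rw [hsr, ih0s, ih2s, e0, e2]
        rcases lt_trichotomy h (k - 1) with hcase | hcase | hcase
        · -- h ≤ k - 2
          rw [if_neg (by exact_mod_cast (by omega : ¬ (h + 1 = k)))]
          rw [show m - 1 + (1 ⊔ (k - (h - 1))) = m + (k - h) from by omega,
              show m + (1 ⊔ (k - (h + 1))) = m + (k - h) - 1 from by omega,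
              show m - 1 + k + 1 = m + k from by omega,
              show m + (1 ⊔ (k - h)) = m + (k - h) from by omega]
          rw [Bn_succ n (m + (k - h)) (by omega),
              Bn_succ n (m + k + 1) (by omega)]
          rw [show m + (k - h) - 1 = m + (k - h) - 1 from rfl,
              show m + k + 1 - 1 = m + k from by omega]
          ring
        · -- h = k - 1, k ≥ 2
          have hkk : k = h + 1 := by omega
          rw [if_pos (by exact_mod_cast congrArg (Nat.cast : ℕ → ℤ) hkk.symm), ih2c, e2]
          rw [show m - 1 + (1 ⊔ (k - (h - 1))) = m + 1 from by omega,
              show m + (1 ⊔ (k - (h + 1))) = m + 1 from by omega,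
              show m - 1 + k + 1 = m + k from by omega,
              show m + (1 ⊔ (k - h)) = m + 1 from by omega]
          rw [Bn_succ n (m + 1) (by omega),
              Bn_succ n (m + k + 1) (by omega)]
          rw [show m + 1 - 1 = m from by omega, show m + k + 1 - 1 = m + k from by omega]
          ring
        · -- h ≥ k
          rw [if_neg (by exact_mod_cast (by omega : ¬ (h + 1 = k)))]
          rw [show m - 1 + (1 ⊔ (k - (h - 1))) = m from by omega,
              show m + (1 ⊔ (k - (h + 1))) = m + 1 from by omega,
              show m - 1 + k + 1 = m + k from by omega,
              show m + (1 ⊔ (k - h)) = m + 1 from by omega]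
          rw [Bn_succ n (m + 1) (by omega),
              Bn_succ n (m + k + 1) (by omega)]
          rw [show m + 1 - 1 = m from by omega, show m + k + 1 - 1 = m + k from by omega]
          ring

lemma binom_cast (n j : ℕ) : binom (n : ℤ) (j : ℤ) = Bn n j := by
  rw [binom, Bn]
  by_cases hj : j ≤ n
  · rw [if_pos ⟨Int.natCast_nonneg j, by exact_mod_cast hj⟩]
    simp
  · rw [if_neg (by push_cast; omega)]
    rw [Nat.choose_eq_zero_of_lt (by omega)]
    simp

/-- For 1 ≤ k ≤ h, the total number of k-down steps over all generalized Dyck paths from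
(0,0) to (n,h) equals C(n, (n+h)/2 + 1) − C(n, (n+h)/2 + k + 1). -/
theorem stmt5 (n h k : ℕ) (hk : 1 ≤ k) (hkh : k ≤ h) (hmod : n % 2 = h % 2) :
    ((∑ p ∈ gdPaths n (h : ℤ), downSteps (k : ℤ) p : ℕ) : ℤ) =
      binom n (((n : ℤ) + h) / 2 + 1) - binom n (((n : ℤ) + h) / 2 + k + 1) := by
  have hdiv : ((n : ℤ) + h) / 2 = (((n + h) / 2 : ℕ) : ℤ) := by omega
  have key2 := (key k hk n h hmod).2
  have hmax : 1 ⊔ (k - h) = 1 := by omega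
  rw [hmax] at key2
  have hL : ((∑ p ∈ gdPaths n (h : ℤ), downSteps (k : ℤ) p : ℕ) : ℤ) =
      ∑ p ∈ gdPaths n (h : ℤ), (downSteps (k : ℤ) p : ℤ) := by push_cast; rfl
  rw [hL, key2, hdiv]
  have e1 : (((n + h) / 2 : ℕ) : ℤ) + 1 = ((((n + h) / 2 + 1 : ℕ)) : ℤ) := by push_cast; ring
  have e2 : (((n + h) / 2 : ℕ) : ℤ) + k + 1 = ((((n + h) / 2 + k + 1 : ℕ)) : ℤ) := by
    push_cast; ring
  rw [e1, e2, binom_cast, binom_cast]
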